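/- arXiv:1608.01239 — 2 statements merged into one kernel-verified Lean document; each statement's English description precedes it below -/
import Mathlib

section
/- Let $\Lambda$ be a finite dimensional Auslander algebra and $S$ a simple right $\Lambda$-module. Then $\mathrm{pd}_\Lambda(S) \le 1$ if and only if $S$ is isomorphic to a direct summand of the socle of $\Lambda$ (equivalently, $\mathrm{Hom}_\Lambda(S, \Lambda) \ne 0$). -/
universe u

open CategoryTheory

section Defs

variable (R : Type u) [Ring R]

/-- `pdLE R n M` : the module `M` has projective dimension at most `n`. -/
def pdLE : ℕ → ModuleCat.{u} R → Prop
  | 0, M => Module.Projective R M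
  | (n+1), M => ∃ (P : ModuleCat.{u} R) (f : P →ₗ[R] M),
      Module.Projective R P ∧ Function.Surjective f ∧
      pdLE n (ModuleCat.of R (LinearMap.ker f))

/-- The projective dimension of a module, as an element of `ℕ∞` (`⊤` if no
finite projective resolution exists). -/
noncomputable def projDim (M : ModuleCat.{u} R) : ℕ∞ :=
  sInf ((↑) '' {n : ℕ | pdLE R n M})

/-- `idLE R n M` : the module `M` has injective dimension at most `n`. -/
def idLE : ℕ → ModuleCat.{u} R → Prop
  | 0, M => Module.Injective R M
  | (n+1), M => ∃ (I : ModuleCat.{u} R) (f : M →ₗ[R] I),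
      Module.Injective R I ∧ Function.Injective f ∧
      idLE n (ModuleCat.of R (I ⧸ LinearMap.range f))

/-- The injective dimension of a module, as an element of `ℕ∞`. -/
noncomputable def injDim (M : ModuleCat.{u} R) : ℕ∞ :=
  sInf ((↑) '' {n : ℕ | idLE R n M})

/-- The global dimension (computed on finitely generated modules) is at most `n`. -/
def gldimLE (n : ℕ) : Prop :=
  ∀ M : ModuleCat.{u} R, Module.Finite R M → pdLE R n M

/-- The global dimension of `R`, computed on finitely generated modules. -/
noncomputable def globalDim : ℕ∞ :=
  sInf ((↑) '' {n : ℕ | gldimLE R n})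

/-- The socle of a module: the sum of all its simple submodules. -/
def socle (M : Type u) [AddCommGroup M] [Module R M] : Submodule R M :=
  sSup {S : Submodule R M | IsSimpleModule R S}

/-- An algebra is an Auslander algebra if its global dimension is at most `2` and
its dominant dimension is at least `2`, i.e. there is an exact sequence
`0 → R → I₀ → I₁` with `I₀`, `I₁` both projective and injective. -/
def IsAuslander : Prop :=
  gldimLE R 2 ∧
  ∃ (I₀ I₁ : ModuleCat.{u} R) (f : R →ₗ[R] I₀) (g : I₀ →ₗ[R] I₁),
    Module.Injective R I₀ ∧ Module.Projective R I₀ ∧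
    Module.Injective R I₁ ∧ Module.Projective R I₁ ∧
    Function.Injective f ∧ LinearMap.ker g = LinearMap.range f

/-- `f : M →ₗ[R] I` realizes `I` as an injective envelope of `M`: `I` is injective
and `f` is an essential embedding. -/
def IsInjectiveEnvelope {M I : Type u} [AddCommGroup M] [Module R M]
    [AddCommGroup I] [Module R I] (f : M →ₗ[R] I) : Prop :=
  Module.Injective R I ∧ Function.Injective f ∧
    ∀ N : Submodule R I, N ≠ ⊥ → N ⊓ LinearMap.range f ≠ ⊥

end Defs

/-! ### Auxiliary material -/

section Aux

variable {R : Type u} [Ring R]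

/-- `M` admits a projective presentation with projective kernel, i.e. it has projective
dimension at most `1`. -/
def Good (R : Type u) [Ring R] (M : Type u) [AddCommGroup M] [Module R M] : Prop :=
  ∃ (P : Type u) (_ : AddCommGroup P) (_ : Module R P) (f : P →ₗ[R] M),
    Module.Projective R P ∧ Function.Surjective f ∧ Module.Projective R (LinearMap.ker f)

lemma projective_of_subsingleton (M : Type u) [AddCommGroup M] [Module R M] [Subsingleton M] :
    Module.Projective R M :=
  Module.projective_def'.mpr ⟨0, by ext m; exact Subsingleton.elim _ m⟩

lemma projective_fst {A B : Type u} [AddCommGroup A] [Module R A] [AddCommGroup B] [Module R B]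
    (h : Module.Projective R (A × B)) : Module.Projective R A := by
  haveI := h
  exact Module.Projective.of_split (LinearMap.inl R A B) (LinearMap.fst R A B) (by ext; rfl)

lemma Good.congr {M N : Type u} [AddCommGroup M] [Module R M] [AddCommGroup N] [Module R N]
    (e : M ≃ₗ[R] N) (h : Good R M) : Good R N := by
  obtain ⟨P, _, _, f, hP, hf, hker⟩ := h
  refine ⟨P, inferInstance, inferInstance, e.toLinearMap ∘ₗ f, hP, e.surjective.comp hf, ?_⟩
  have hk : LinearMap.ker (e.toLinearMap ∘ₗ f) = LinearMap.ker f := by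
    ext x; simp [LinearMap.mem_ker]
  rw [hk]; exact hker

lemma Good.of_projective {M : Type u} [AddCommGroup M] [Module R M]
    (h : Module.Projective R M) : Good R M := by
  refine ⟨M, inferInstance, inferInstance, LinearMap.id, h, Function.surjective_id, ?_⟩
  rw [LinearMap.ker_id]
  exact projective_of_subsingleton _

lemma exists_free_cover (M : Type u) [AddCommGroup M] [Module R M] :
    ∃ (F : Type u) (_ : AddCommGroup F) (_ : Module R F) (t : F →ₗ[R] M),
      Module.Projective R F ∧ Function.Surjective t :=
  ⟨M →₀ R, inferInstance, inferInstance, Finsupp.linearCombination R id, inferInstance,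
    Finsupp.linearCombination_id_surjective R M⟩

lemma exists_equiv_ker_prod {X B : Type u} [AddCommGroup X] [Module R X]
    [AddCommGroup B] [Module R B]
    (hB : Module.Projective R B) (π : X →ₗ[R] B) (hπ : Function.Surjective π) :
    Nonempty (X ≃ₗ[R] (LinearMap.ker π × B)) := by
  haveI := hB
  obtain ⟨s, hs⟩ := Module.projective_lifting_property π LinearMap.id hπ
  have hs' : ∀ b, π (s b) = b := fun b => LinearMap.congr_fun hs b
  let L1 : X →ₗ[R] LinearMap.ker π :=
    (LinearMap.id - s ∘ₗ π).codRestrict (LinearMap.ker π)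
      (fun x => by simp [LinearMap.mem_ker, hs'])
  let L : X →ₗ[R] (LinearMap.ker π × B) := L1.prod π
  let Lb : (LinearMap.ker π × B) →ₗ[R] X := (LinearMap.ker π).subtype.coprod s
  refine ⟨LinearEquiv.ofLinear L Lb ?_ ?_⟩
  · refine LinearMap.ext fun yb => ?_
    obtain ⟨⟨y, hy⟩, b⟩ := yb
    have hyπ : π y = 0 := LinearMap.mem_ker.mp hy
    have h2 : π (y + s b) = b := by simp [map_add, hyπ, hs']
    refine Prod.ext (Subtype.ext ?_) ?_
    · show (y + s b) - s (π (y + s b)) = y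
      rw [h2]; abel
    · exact h2
  · refine LinearMap.ext fun x => ?_
    show (x - s (π x)) + s (π x) = x
    abel

/-- Schanuel's lemma. -/
lemma schanuel {M P Q : Type u} [AddCommGroup M] [Module R M] [AddCommGroup P] [Module R P]
    [AddCommGroup Q] [Module R Q] (f : P →ₗ[R] M) (g : Q →ₗ[R] M)
    (hP : Module.Projective R P) (hQ : Module.Projective R Q)
    (hf : Function.Surjective f) (hg : Function.Surjective g) :
    Nonempty ((LinearMap.ker f × Q) ≃ₗ[R] (LinearMap.ker g × P)) := by
  set θ : (P × Q) →ₗ[R] M := f ∘ₗ LinearMap.fst R P Q - g ∘ₗ LinearMap.snd R P Q with hθ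
  have hθ' : ∀ pq : P × Q, θ pq = f pq.1 - g pq.2 := fun pq => rfl
  set X := LinearMap.ker θ with hX
  let π₁ : X →ₗ[R] P := (LinearMap.fst R P Q).domRestrict X
  let π₂ : X →ₗ[R] Q := (LinearMap.snd R P Q).domRestrict X
  have hmem : ∀ pq : P × Q, pq ∈ X ↔ f pq.1 = g pq.2 := by
    intro pq
    rw [hX, LinearMap.mem_ker, hθ', sub_eq_zero]
  have hπ₁ : Function.Surjective π₁ := by
    intro p
    obtain ⟨q, hq⟩ := hg (f p)
    exact ⟨⟨(p, q), (hmem (p, q)).mpr hq.symm⟩, rfl⟩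
  have hπ₂ : Function.Surjective π₂ := by
    intro q
    obtain ⟨p, hp⟩ := hf (g q)
    exact ⟨⟨(p, q), (hmem (p, q)).mpr hp⟩, rfl⟩
  let e₁ : (LinearMap.ker π₁) ≃ₗ[R] (LinearMap.ker g) :=
    { toFun := fun x => ⟨(x.1.1 : P × Q).2, by
        have h1 : f (x.1.1 : P × Q).1 = g (x.1.1 : P × Q).2 := (hmem _).mp x.1.2
        have h2 : (x.1.1 : P × Q).1 = 0 := x.2
        rw [LinearMap.mem_ker, ← h1, h2, map_zero]⟩
      invFun := fun y => ⟨⟨((0 : P), (y : Q)), (hmem _).mpr (by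
        rw [map_zero, LinearMap.mem_ker.mp y.2])⟩, rfl⟩
      map_add' := fun x y => rfl
      map_smul' := fun c x => rfl
      left_inv := fun x => by
        refine Subtype.ext (Subtype.ext (Prod.ext ?_ rfl))
        exact (x.2 : (x.1.1 : P × Q).1 = 0).symm
      right_inv := fun y => rfl }
  let e₂ : (LinearMap.ker π₂) ≃ₗ[R] (LinearMap.ker f) :=
    { toFun := fun x => ⟨(x.1.1 : P × Q).1, by
        have h1 : f (x.1.1 : P × Q).1 = g (x.1.1 : P × Q).2 := (hmem _).mp x.1.2
        have h2 : (x.1.1 : P × Q).2 = 0 := x.2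
        rw [LinearMap.mem_ker, h1, h2, map_zero]⟩
      invFun := fun y => ⟨⟨((y : P), (0 : Q)), (hmem _).mpr (by
        rw [map_zero, LinearMap.mem_ker.mp y.2])⟩, rfl⟩
      map_add' := fun x y => rfl
      map_smul' := fun c x => rfl
      left_inv := fun x => by
        refine Subtype.ext (Subtype.ext (Prod.ext rfl ?_))
        exact (x.2 : (x.1.1 : P × Q).2 = 0).symm
      right_inv := fun y => rfl }
  obtain ⟨u₁⟩ := exists_equiv_ker_prod hP π₁ hπ₁
  obtain ⟨u₂⟩ := exists_equiv_ker_prod hQ π₂ hπ₂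
  exact ⟨((e₂.symm.prodCongr (LinearEquiv.refl R Q)).trans u₂.symm).trans
    (u₁.trans (e₁.prodCongr (LinearEquiv.refl R P)))⟩

/-- `p.prod q` is isomorphic to `p × q`. -/
def Submodule.prodEquivProd {M N : Type u} [AddCommGroup M] [Module R M]
    [AddCommGroup N] [Module R N] (p : Submodule R M) (q : Submodule R N) :
    (p.prod q) ≃ₗ[R] (p × q) where
  toFun x := (⟨(x : M × N).1, x.2.1⟩, ⟨(x : M × N).2, x.2.2⟩)
  invFun y := ⟨((y.1 : M), (y.2 : N)), ⟨y.1.2, y.2.2⟩⟩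
  map_add' _ _ := rfl
  map_smul' _ _ := rfl
  left_inv _ := rfl
  right_inv _ := rfl

lemma Good.prod {M N : Type u} [AddCommGroup M] [Module R M] [AddCommGroup N] [Module R N]
    (hM : Good R M) (hN : Good R N) : Good R (M × N) := by
  obtain ⟨P, _, _, f, hP, hf, hkf⟩ := hM
  obtain ⟨Q, _, _, g, hQ, hg, hkg⟩ := hN
  haveI := hP; haveI := hQ; haveI := hkf; haveI := hkg
  refine ⟨P × Q, inferInstance, inferInstance, f.prodMap g, inferInstance,
    hf.prodMap hg, ?_⟩
  rw [LinearMap.ker_prodMap]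
  exact Module.Projective.of_equiv (Submodule.prodEquivProd _ _).symm

lemma Good.fst {M N : Type u} [AddCommGroup M] [Module R M] [AddCommGroup N] [Module R N]
    (h : Good R (M × N)) : Good R M := by
  obtain ⟨P, _, _, f, hP, hf, hkf⟩ := h
  obtain ⟨F, _, _, tM, hF, htM⟩ := exists_free_cover (R := R) M
  obtain ⟨F', _, _, tN, hF', htN⟩ := exists_free_cover (R := R) N
  haveI := hP; haveI := hF; haveI := hF'; haveI := hkf
  obtain ⟨E⟩ := schanuel f (tM.prodMap tN) hP (inferInstance : Module.Projective R (F × F'))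
    hf (htM.prodMap htN)
  haveI : Module.Projective R (LinearMap.ker f × (F × F')) := inferInstance
  haveI h2 : Module.Projective R (LinearMap.ker (tM.prodMap tN) × P) :=
    Module.Projective.of_equiv E
  haveI h3 : Module.Projective R (LinearMap.ker (tM.prodMap tN)) := projective_fst h2
  have h4 : Module.Projective R (LinearMap.ker tM × LinearMap.ker tN) := by
    rw [LinearMap.ker_prodMap] at h3
    haveI := h3
    exact Module.Projective.of_equiv (Submodule.prodEquivProd _ _)
  exact ⟨F, inferInstance, inferInstance, tM, hF, htM, projective_fst h4⟩

lemma Good.ker_projective {M P : Type u} [AddCommGroup M] [Module R M]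
    [AddCommGroup P] [Module R P] (h : Good R M) (π : P →ₗ[R] M)
    (hπ : Function.Surjective π) (hP : Module.Projective R P) :
    Module.Projective R (LinearMap.ker π) := by
  obtain ⟨Q, _, _, q, hQ, hq, hkq⟩ := h
  obtain ⟨E⟩ := schanuel π q hP hQ hπ hq
  haveI := hkq; haveI := hP
  haveI : Module.Projective R (LinearMap.ker q × P) := inferInstance
  exact projective_fst (Module.Projective.of_equiv E.symm)

lemma pdLE_one_iff_good (M : Type u) [AddCommGroup M] [Module R M] :
    pdLE R 1 (ModuleCat.of R M) ↔ Good R M := by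
  constructor
  · rintro ⟨P, f, hP, hf, hker⟩
    exact ⟨P, inferInstance, inferInstance, f, hP, hf, hker⟩
  · rintro ⟨P, _, _, f, hP, hf, hker⟩
    exact ⟨ModuleCat.of R P, f, hP, hf, hker⟩

lemma hom_zero_of_projective {S' : Type u} [AddCommGroup S'] [Module R S']
    (H : ∀ φ : S' →ₗ[R] R, φ = 0) {P : Type u} [AddCommGroup P] [Module R P]
    (hP : Module.Projective R P) (h : S' →ₗ[R] P) : h = 0 := by
  obtain ⟨s, hs⟩ := Module.projective_def'.mp hP
  ext x
  have h2 : s (h x) = 0 := by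
    ext i
    have h1 : (Finsupp.lapply i) ∘ₗ (s ∘ₗ h) = 0 := H _
    simpa using LinearMap.congr_fun h1 x
  have h3 := LinearMap.congr_fun hs (h x)
  simp only [LinearMap.coe_comp, Function.comp_apply, LinearMap.id_apply] at h3
  rw [h2, map_zero] at h3
  simp [← h3]

lemma factor_zero {S' X : Type u} [AddCommGroup S'] [Module R S']
    [AddCommGroup X] [Module R X]
    {π : R →ₗ[R] S'} (hπ : Function.Surjective π)
    (hX : ∀ hh : S' →ₗ[R] X, hh = 0) (h : R →ₗ[R] X)
    (hker : LinearMap.ker π ≤ LinearMap.ker h) : h = 0 := by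
  have e := π.quotKerEquivOfSurjective hπ
  have h0 : ∀ y : R ⧸ LinearMap.ker π, (LinearMap.ker π).liftQ h hker y = 0 := by
    intro y
    have hz := hX (((LinearMap.ker π).liftQ h hker) ∘ₗ (e.symm : S' →ₗ[R] R ⧸ LinearMap.ker π))
    calc (LinearMap.ker π).liftQ h hker y
        = (((LinearMap.ker π).liftQ h hker) ∘ₗ (e.symm : S' →ₗ[R] R ⧸ LinearMap.ker π)) (e y) := by
          rw [LinearMap.comp_apply, LinearEquiv.coe_coe, e.symm_apply_apply]
      _ = 0 := by rw [hz]; rfl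
  refine LinearMap.ext fun x => ?_
  have h1 := LinearMap.congr_fun ((LinearMap.ker π).liftQ_mkQ h hker) x
  rw [LinearMap.comp_apply] at h1
  rw [LinearMap.zero_apply, ← h1, h0]

end Aux

/-- Over a finite dimensional Auslander algebra `Λ`, a simple module `S` has projective
dimension at most `1` iff it is isomorphic to a (necessarily direct summand) simple
submodule of the socle of `Λ`, equivalently iff `Hom_Λ(S, Λ) ≠ 0`. -/
theorem stmt_7 (k Λ : Type u) [Field k] [Ring Λ] [Algebra k Λ] [FiniteDimensional k Λ]
    (hΛ : IsAuslander Λ)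
    (S : Type u) [AddCommGroup S] [Module Λ S] (hS : IsSimpleModule Λ S) :
    (pdLE Λ 1 (ModuleCat.of Λ S) ↔
      ∃ T : Submodule Λ Λ, T ≤ socle Λ Λ ∧ Nonempty (S ≃ₗ[Λ] T)) ∧
    (pdLE Λ 1 (ModuleCat.of Λ S) ↔ ∃ f : S →ₗ[Λ] Λ, f ≠ 0) := by
  haveI := hS
  haveI : Nontrivial S := IsSimpleModule.nontrivial Λ S
  obtain ⟨hgl, I₀, I₁, f, g, hI₀inj, hI₀proj, hI₁inj, hI₁proj, hfinj, hker⟩ := hΛ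
  have hgf : ∀ y : Λ, g (f y) = 0 := fun y => by
    have : f y ∈ LinearMap.ker g := by rw [hker]; exact LinearMap.mem_range_self f y
    exact LinearMap.mem_ker.mp this
  have main : pdLE Λ 1 (ModuleCat.of Λ S) ↔ ∃ φ : S →ₗ[Λ] Λ, φ ≠ 0 := by
    rw [pdLE_one_iff_good]
    constructor
    · -- hard direction
      intro hGood
      by_contra hc
      push_neg at hc
      have Hzero : ∀ φ : S →ₗ[Λ] Λ, φ = 0 := hc
      obtain ⟨s₀, hs₀⟩ := exists_ne (0 : S)
      set π := LinearMap.toSpanSingleton Λ S s₀ with hπdef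
      have hπ : Function.Surjective π := IsSimpleModule.toSpanSingleton_surjective Λ hs₀
      set K := LinearMap.ker π with hKdef
      have hKproj : Module.Projective Λ K :=
        hGood.ker_projective π hπ inferInstance
      -- every map from S to I₀ vanishes
      have HI₀ : ∀ h : S →ₗ[Λ] I₀, h = 0 := by
        intro h
        have hgh : (g ∘ₗ h) = 0 := hom_zero_of_projective Hzero hI₁proj _
        have hmem : ∀ x, h x ∈ LinearMap.range f := fun x => by
          rw [← hker]
          exact LinearMap.mem_ker.mpr (LinearMap.congr_fun hgh x)
        have h0 := Hzero (((LinearEquiv.ofInjective f hfinj).symm :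
          LinearMap.range f →ₗ[Λ] Λ) ∘ₗ h.codRestrict (LinearMap.range f) hmem)
        refine LinearMap.ext fun x => ?_
        have h1 : f (((LinearEquiv.ofInjective f hfinj).symm)
            (⟨h x, hmem x⟩ : LinearMap.range f)) = h x := by
          rw [← LinearEquiv.ofInjective_apply f (h := hfinj),
            (LinearEquiv.ofInjective f hfinj).apply_symm_apply]
        have h2 : ((LinearEquiv.ofInjective f hfinj).symm)
            (⟨h x, hmem x⟩ : LinearMap.range f) = 0 := LinearMap.congr_fun h0 x
        rw [LinearMap.zero_apply, ← h1, h2, map_zero]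
      -- K is finitely generated
      haveI : IsNoetherian Λ Λ := isNoetherian_of_tower k inferInstance
      haveI hKfin : Module.Finite Λ K := Module.Finite.iff_fg.mpr (IsNoetherian.noetherian K)
      obtain ⟨n, t, ht⟩ := Module.Finite.exists_fin' Λ K
      haveI := hKproj
      obtain ⟨sK, hsK⟩ := Module.projective_lifting_property t LinearMap.id ht
      have hsK' : ∀ kk : K, t (sK kk) = kk := fun kk => LinearMap.congr_fun hsK kk
      -- every map K → Λ extends to Λ → Λ
      have ext1 : ∀ ψ : (K : Type u) →ₗ[Λ] Λ, ∃ Ψ : Λ →ₗ[Λ] Λ,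
          ∀ kk : K, Ψ (kk : Λ) = ψ kk := by
        intro ψ
        obtain ⟨Ψ₀, hΨ₀⟩ := hI₀inj.out K.subtype K.injective_subtype (f ∘ₗ ψ)
        have hgΨ : (g ∘ₗ Ψ₀) = 0 := by
          refine factor_zero hπ (fun hh => hom_zero_of_projective Hzero hI₁proj hh) _ ?_
          intro x hx
          refine LinearMap.mem_ker.mpr ?_
          have h1 : Ψ₀ x = f (ψ ⟨x, hx⟩) := hΨ₀ ⟨x, hx⟩
          rw [LinearMap.comp_apply, h1, hgf]
        have hmem : ∀ x, Ψ₀ x ∈ LinearMap.range f := fun x => by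
          rw [← hker]
          exact LinearMap.mem_ker.mpr (LinearMap.congr_fun hgΨ x)
        refine ⟨((LinearEquiv.ofInjective f hfinj).symm : LinearMap.range f →ₗ[Λ] Λ) ∘ₗ
          Ψ₀.codRestrict (LinearMap.range f) hmem, fun kk => hfinj ?_⟩
        have h1 : f (((LinearEquiv.ofInjective f hfinj).symm)
            (⟨Ψ₀ (kk : Λ), hmem kk⟩ : LinearMap.range f)) = Ψ₀ (kk : Λ) := by
          rw [← LinearEquiv.ofInjective_apply f (h := hfinj),
            (LinearEquiv.ofInjective f hfinj).apply_symm_apply]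
        rw [LinearMap.comp_apply]
        show f (((LinearEquiv.ofInjective f hfinj).symm)
            (⟨Ψ₀ (kk : Λ), hmem kk⟩ : LinearMap.range f)) = f (ψ kk)
        rw [h1]
        exact hΨ₀ kk
      -- assemble a retraction d : Λ → Λ with image in K fixing K
      choose Ψs hΨs using fun i : Fin n => ext1 ((LinearMap.proj i) ∘ₗ sK)
      set E : Λ →ₗ[Λ] (Fin n → Λ) := LinearMap.pi Ψs with hE
      set d : Λ →ₗ[Λ] Λ := K.subtype ∘ₗ t ∘ₗ E with hd
      have hdK : ∀ kk : K, d (kk : Λ) = (kk : Λ) := by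
        intro kk
        have hEkk : E (kk : Λ) = sK kk := by
          funext i
          exact hΨs i kk
        rw [hd, LinearMap.comp_apply, LinearMap.comp_apply, hEkk, hsK' kk]
        rfl
      have hdmem : ∀ x : Λ, d x ∈ K := fun x => by
        rw [hd]
        exact (t (E x)).2
      -- the map f ∘ (id - d) kills K, hence vanishes
      have hzero2 : (f ∘ₗ (LinearMap.id - d)) = 0 := by
        refine factor_zero hπ HI₀ _ ?_
        intro x hx
        refine LinearMap.mem_ker.mpr ?_
        have h1 : d x = x := by
          have := hdK ⟨x, hx⟩
          simpa using this
        rw [LinearMap.comp_apply, LinearMap.sub_apply, LinearMap.id_apply, h1, sub_self,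
          map_zero]
      -- hence every element of Λ lies in K, contradiction
      have hall : ∀ x : Λ, x ∈ K := by
        intro x
        have h1 := LinearMap.congr_fun hzero2 x
        rw [LinearMap.comp_apply, LinearMap.zero_apply] at h1
        have h2 : x - d x = 0 := by
          apply hfinj
          rw [map_zero]
          exact h1
        rw [sub_eq_zero] at h2
        rw [h2]
        exact hdmem x
      have h1K : (1 : Λ) ∈ K := hall 1
      have : π 1 = 0 := LinearMap.mem_ker.mp h1K
      rw [hπdef, LinearMap.toSpanSingleton_apply, one_smul] at this
      exact hs₀ this
    · -- easy direction, uses global dimension ≤ 2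
      rintro ⟨φ, hφ⟩
      have hkφ : LinearMap.ker φ = ⊥ := by
        rcases eq_bot_or_eq_top (LinearMap.ker φ) with h | h
        · exact h
        · exact absurd (LinearMap.ker_eq_top.mp h) hφ
      have e : S ≃ₗ[Λ] LinearMap.range φ :=
        LinearEquiv.ofInjective φ (LinearMap.ker_eq_bot.mp hkφ)
      set T := LinearMap.range φ with hT
      haveI : Module.Finite Λ (Λ ⧸ T) := Module.Finite.of_surjective T.mkQ T.mkQ_surjective
      obtain ⟨P', q, hP', hq, h1⟩ :=
        hgl (ModuleCat.of Λ (Λ ⧸ T)) (inferInstance : Module.Finite Λ (Λ ⧸ T))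
      have h1' : Good Λ (LinearMap.ker q) := (pdLE_one_iff_good _).mp h1
      have q' : (P' : Type u) →ₗ[Λ] (Λ ⧸ T) := q
      obtain ⟨E⟩ := schanuel T.mkQ (q : (P' : Type u) →ₗ[Λ] (Λ ⧸ T)) inferInstance hP'
        T.mkQ_surjective hq
      have hGprod : Good Λ (LinearMap.ker (q : (P' : Type u) →ₗ[Λ] (Λ ⧸ T)) × Λ) :=
        Good.prod h1' (Good.of_projective inferInstance)
      have hGmk : Good Λ (LinearMap.ker T.mkQ × (P' : Type u)) := hGprod.congr E.symm
      have hGT : Good Λ (LinearMap.ker T.mkQ) := hGmk.fst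
      have hGT' : Good Λ T := hGT.congr (LinearEquiv.ofEq _ _ (Submodule.ker_mkQ T))
      exact hGT'.congr e.symm
  have rhs : (∃ φ : S →ₗ[Λ] Λ, φ ≠ 0) ↔
      (∃ T : Submodule Λ Λ, T ≤ socle Λ Λ ∧ Nonempty (S ≃ₗ[Λ] T)) := by
    constructor
    · rintro ⟨φ, hφ⟩
      have hkφ : LinearMap.ker φ = ⊥ := by
        rcases eq_bot_or_eq_top (LinearMap.ker φ) with h | h
        · exact h
        · exact absurd (LinearMap.ker_eq_top.mp h) hφ
      have e : S ≃ₗ[Λ] LinearMap.range φ :=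
        LinearEquiv.ofInjective φ (LinearMap.ker_eq_bot.mp hkφ)
      refine ⟨LinearMap.range φ, ?_, ⟨e⟩⟩
      have hsimple : IsSimpleModule Λ (LinearMap.range φ) := IsSimpleModule.congr e.symm
      exact le_sSup hsimple
    · rintro ⟨T, _, ⟨e⟩⟩
      refine ⟨T.subtype ∘ₗ e.toLinearMap, ?_⟩
      intro h0
      obtain ⟨s₀, hs₀⟩ := exists_ne (0 : S)
      apply hs₀
      have h1 := LinearMap.congr_fun h0 s₀
      rw [LinearMap.comp_apply, LinearMap.zero_apply] at h1
      have he : e s₀ = 0 := Subtype.ext (by simpa using h1)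
      simpa using e.map_eq_zero_iff.mp he
  exact ⟨main.trans rhs, main⟩
end

section
/- Let $\Lambda$ be a finite dimensional Auslander algebra and $M$ a finitely generated right $\Lambda$-module. Then $\mathrm{pd}_\Lambda(M) \le 1$ if and only if $\mathrm{pd}_\Lambda(\mathrm{soc}\,M) \le 1$. -/
universe u

open CategoryTheory

section Aux

open Function LinearMap

variable {Λ : Type u} [Ring Λ]

lemma pdLE_one_iff (M : ModuleCat.{u} Λ) :
    pdLE Λ 1 M ↔ ∃ (P : ModuleCat.{u} Λ) (f : P →ₗ[Λ] M),
      Module.Projective Λ P ∧ Function.Surjective f ∧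
      Module.Projective Λ ↥(LinearMap.ker f) :=
  Iff.rfl

lemma pdLE_two_iff (M : ModuleCat.{u} Λ) :
    pdLE Λ 2 M ↔ ∃ (P : ModuleCat.{u} Λ) (f : P →ₗ[Λ] M),
      Module.Projective Λ P ∧ Function.Surjective f ∧
      pdLE Λ 1 (ModuleCat.of Λ ↥(LinearMap.ker f)) :=
  Iff.rfl

lemma injective_pi {ι : Type} {I : Type u} [AddCommGroup I] [Module Λ I]
    (hI : Module.Injective Λ I) : Module.Injective Λ (ι → I) := by
  constructor
  intro X Y _ _ _ _ f hf g
  have H : ∀ i : ι, ∃ h : Y →ₗ[Λ] I, ∀ x, h (f x) = (LinearMap.proj i).comp g x := fun i =>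
    hI.out f hf ((LinearMap.proj i).comp g)
  choose h hh using H
  exact ⟨LinearMap.pi h, fun x => funext fun i => hh i x⟩

lemma injective_prod {A B : Type u} [AddCommGroup A] [Module Λ A] [AddCommGroup B] [Module Λ B]
    (hA : Module.Injective Λ A) (hB : Module.Injective Λ B) : Module.Injective Λ (A × B) := by
  constructor
  intro X Y _ _ _ _ f hf g
  obtain ⟨hA', hhA⟩ := hA.out f hf ((LinearMap.fst Λ A B).comp g)
  obtain ⟨hB', hhB⟩ := hB.out f hf ((LinearMap.snd Λ A B).comp g)
  exact ⟨hA'.prod hB', fun x => Prod.ext (hhA x) (hhB x)⟩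

lemma projective_pi {ι : Type} [Fintype ι] [DecidableEq ι] {I : Type u}
    [AddCommGroup I] [Module Λ I] (hI : Module.Projective Λ I) :
    Module.Projective Λ (ι → I) := by
  haveI := hI
  apply Module.Projective.of_lifting_property
  intro A B _ _ _ _ f g hf
  have H : ∀ i : ι, ∃ h : I →ₗ[Λ] A,
      f.comp h = g.comp (LinearMap.single Λ (fun _ : ι => I) i) := fun i =>
    Module.projective_lifting_property f (g.comp (LinearMap.single Λ (fun _ : ι => I) i)) hf
  choose h hh using H
  refine ⟨∑ i, (h i).comp (LinearMap.proj i), ?_⟩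
  refine LinearMap.ext fun x => ?_
  have hx : ∀ i : ι, f (h i (x i)) = g (Pi.single i (x i)) := fun i =>
    LinearMap.congr_fun (hh i) (x i)
  simp only [LinearMap.comp_apply, LinearMap.sum_apply, map_sum, LinearMap.proj_apply, hx]
  rw [← map_sum]
  congr 1
  exact Finset.univ_sum_single x

lemma proj_congr {X : Type u} [AddCommGroup X] [Module Λ X] {p q : Submodule Λ X} (h : p = q)
    (hp : Module.Projective Λ ↥p) : Module.Projective Λ ↥q := by subst h; exact hp

lemma pdLE_one_equiv {M N : Type u} [AddCommGroup M] [Module Λ M] [AddCommGroup N] [Module Λ N]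
    (e : M ≃ₗ[Λ] N) (h : pdLE Λ 1 (ModuleCat.of Λ M)) : pdLE Λ 1 (ModuleCat.of Λ N) := by
  rw [pdLE_one_iff] at h ⊢
  obtain ⟨P, f, hP, hs, hk⟩ := h
  refine ⟨P, e.toLinearMap.comp f, hP, e.surjective.comp hs, ?_⟩
  have hker : LinearMap.ker (e.toLinearMap.comp f) = LinearMap.ker f := by
    rw [LinearMap.ker_comp, LinearEquiv.ker, Submodule.comap_bot]
  exact proj_congr hker.symm hk

lemma projective_of_extension {X F : Type u} [AddCommGroup X] [Module Λ X]
    [AddCommGroup F] [Module Λ F]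
    (π : X →ₗ[Λ] F) (hs : Surjective π) (hF : Module.Projective Λ F)
    (hk : Module.Projective Λ ↥(LinearMap.ker π)) : Module.Projective Λ X := by
  haveI := hF
  obtain ⟨t, ht⟩ := Module.projective_lifting_property π LinearMap.id hs
  have htt : ∀ y, π (t y) = y := fun y => LinearMap.congr_fun ht y
  have hmem : ∀ x : X, x - t (π x) ∈ LinearMap.ker π := fun x => by
    simp [LinearMap.mem_ker, map_sub, htt]
  let Φ : X →ₗ[Λ] ↥(LinearMap.ker π) × F :=
    LinearMap.prod (LinearMap.codRestrict _ (LinearMap.id - t ∘ₗ π) hmem) π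
  let Ψ : ↥(LinearMap.ker π) × F →ₗ[Λ] X :=
    (LinearMap.ker π).subtype ∘ₗ LinearMap.fst Λ _ F + t ∘ₗ LinearMap.snd Λ _ F
  have h1 : Ψ.comp Φ = LinearMap.id := by
    ext x
    simp [Φ, Ψ]
  haveI : Module.Projective Λ (↥(LinearMap.ker π) × F) := by
    haveI := hk; infer_instance
  exact Module.Projective.of_split Φ Ψ h1

lemma projective_ker_retract {Y P : Type u} [AddCommGroup Y] [Module Λ Y]
    [AddCommGroup P] [Module Λ P]
    (π : Y →ₗ[Λ] P) (hs : Surjective π) (hP : Module.Projective Λ P)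
    (hY : Module.Projective Λ Y) : Module.Projective Λ ↥(LinearMap.ker π) := by
  haveI := hP; haveI := hY
  obtain ⟨s, hst⟩ := Module.projective_lifting_property π LinearMap.id hs
  have hsp : ∀ y, π (s y) = y := fun y => LinearMap.congr_fun hst y
  have hmem : ∀ x : Y, x - s (π x) ∈ LinearMap.ker π := fun x => by
    simp [LinearMap.mem_ker, map_sub, hsp]
  refine Module.Projective.of_split (LinearMap.ker π).subtype
      (LinearMap.codRestrict _ (LinearMap.id - s ∘ₗ π) hmem) ?_
  ext x
  simp [(x.2 : π x.1 = 0)]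

end Aux

section Aux2

open Function LinearMap

variable {Λ : Type u} [Ring Λ]

lemma pdLE_one_extension {X F : Type u} [AddCommGroup X] [Module Λ X] [AddCommGroup F]
    [Module Λ F] (π : X →ₗ[Λ] F) (hs : Surjective π) (hF : Module.Projective Λ F)
    (hker : pdLE Λ 1 (ModuleCat.of Λ ↥(LinearMap.ker π))) : pdLE Λ 1 (ModuleCat.of Λ X) := by
  haveI := hF
  obtain ⟨t, ht⟩ := Module.projective_lifting_property π LinearMap.id hs
  have htt : ∀ y, π (t y) = y := fun y => LinearMap.congr_fun ht y
  rw [pdLE_one_iff] at hker ⊢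
  obtain ⟨R, r0, hR, hr0, hkr0⟩ := hker
  haveI := hR
  let r : ↥R →ₗ[Λ] ↥(LinearMap.ker π) := r0
  have hr : Surjective r := hr0
  have hkr : Module.Projective Λ ↥(LinearMap.ker r) := hkr0
  haveI := hkr
  let φ : ↥R × F →ₗ[Λ] X :=
    (LinearMap.ker π).subtype ∘ₗ r ∘ₗ LinearMap.fst Λ ↥R F + t ∘ₗ LinearMap.snd Λ ↥R F
  have hφ : ∀ u : ↥R × F, φ u = ((r u.1 : X) + t u.2) := fun u => rfl
  have hsurj : Surjective φ := by
    intro x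
    obtain ⟨u, hu⟩ := hr ⟨x - t (π x), by simp [LinearMap.mem_ker, map_sub, htt]⟩
    refine ⟨(u, π x), ?_⟩
    rw [hφ, hu]
    simp
  have hkerproj : Module.Projective Λ ↥(LinearMap.ker φ) := by
    have hmem : ∀ w : ↥R × F, w ∈ LinearMap.ker φ → w.2 = 0 ∧ r w.1 = 0 := by
      intro w hw
      have h0 : φ w = 0 := hw
      have h2 : w.2 = 0 := by
        have h3 := congrArg π h0
        rw [hφ, map_add, map_zero, LinearMap.mem_ker.mp (r w.1).2, htt, zero_add] at h3
        exact h3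
      refine ⟨h2, ?_⟩
      rw [hφ, h2, map_zero, add_zero] at h0
      exact Subtype.ext h0
    let fwd : ↥(LinearMap.ker r) →ₗ[Λ] ↥(LinearMap.ker φ) :=
      LinearMap.codRestrict _ (LinearMap.prod ((LinearMap.ker r).subtype) 0) (fun v => by
        have hv : r v.1 = 0 := LinearMap.mem_ker.mp v.2
        have : φ (v.1, 0) = 0 := by rw [hφ, hv]; simp
        exact this)
    let bwd : ↥(LinearMap.ker φ) →ₗ[Λ] ↥(LinearMap.ker r) :=
      LinearMap.codRestrict _ (LinearMap.fst Λ ↥R F ∘ₗ (LinearMap.ker φ).subtype)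
        (fun w => LinearMap.mem_ker.mpr (hmem w.1 w.2).2)
    exact Module.Projective.of_equiv (LinearEquiv.ofLinear fwd bwd
      (LinearMap.ext fun w => Subtype.ext (Prod.ext rfl ((hmem w.1 w.2).1).symm))
      (LinearMap.ext fun v => Subtype.ext rfl))
  exact ⟨ModuleCat.of Λ (↥R × F), φ, inferInstanceAs (Module.Projective Λ (↥R × F)),
    hsurj, hkerproj⟩

lemma pdLE_one_ker {X P : Type u} [AddCommGroup X] [Module Λ X] [AddCommGroup P] [Module Λ P]
    (π : X →ₗ[Λ] P) (hs : Surjective π) (hP : Module.Projective Λ P)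
    (hX : pdLE Λ 1 (ModuleCat.of Λ X)) :
    pdLE Λ 1 (ModuleCat.of Λ ↥(LinearMap.ker π)) := by
  haveI := hP
  obtain ⟨s, hst⟩ := Module.projective_lifting_property π LinearMap.id hs
  have hsp : ∀ y, π (s y) = y := fun y => LinearMap.congr_fun hst y
  rw [pdLE_one_iff] at hX ⊢
  obtain ⟨R, g0, hR, hg0, hkg0⟩ := hX
  let g : ↥R →ₗ[Λ] X := g0
  have hg : Surjective g := hg0
  have hkg : Module.Projective Λ ↥(LinearMap.ker g) := hkg0
  haveI := hkg
  have hmem : ∀ x : X, x - s (π x) ∈ LinearMap.ker π := fun x => by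
    simp [LinearMap.mem_ker, map_sub, hsp]
  let ρ : X →ₗ[Λ] ↥(LinearMap.ker π) := LinearMap.codRestrict _ (LinearMap.id - s ∘ₗ π) hmem
  have hρ : ∀ x, (ρ x : X) = x - s (π x) := fun x => rfl
  have hρk : ∀ v : ↥(LinearMap.ker π), ρ v.1 = v := fun v => Subtype.ext (by
    rw [hρ, LinearMap.mem_ker.mp v.2, map_zero, sub_zero])
  have hsurj : Surjective (ρ ∘ₗ g) := fun v => (hg v.1).imp (fun u hu => by
      rw [LinearMap.comp_apply, hu, hρk])
  have hker : ∀ u : ↥R, u ∈ LinearMap.ker (ρ ∘ₗ g) ↔ g u = s (π (g u)) := by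
    intro u
    rw [LinearMap.mem_ker, LinearMap.comp_apply]
    constructor
    · intro h
      have h2 := congrArg (Subtype.val) h
      rw [hρ] at h2
      exact sub_eq_zero.mp h2
    · intro h
      apply Subtype.ext
      rw [hρ]
      exact sub_eq_zero.mpr h
  have hkerproj : Module.Projective Λ ↥(LinearMap.ker (ρ ∘ₗ g)) := by
    let τ : ↥(LinearMap.ker (ρ ∘ₗ g)) →ₗ[Λ] P := π ∘ₗ g ∘ₗ (LinearMap.ker (ρ ∘ₗ g)).subtype
    have hτ : ∀ w : ↥(LinearMap.ker (ρ ∘ₗ g)), τ w = π (g w.1) := fun w => rfl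
    have hτs : Surjective τ := by
      intro p
      obtain ⟨u, hu⟩ := hg (s p)
      have humem : u ∈ LinearMap.ker (ρ ∘ₗ g) := (hker u).mpr (by rw [hu, hsp])
      exact ⟨⟨u, humem⟩, by rw [hτ, hu, hsp]⟩
    have hτ0 : ∀ w : ↥(LinearMap.ker τ), g w.1.1 = 0 := by
      intro w
      have h1 : π (g w.1.1) = 0 := w.2
      have h2 := (hker w.1.1).mp w.1.2
      rw [h1, map_zero] at h2
      exact h2
    have hkτ : Module.Projective Λ ↥(LinearMap.ker τ) := by
      let fwd : ↥(LinearMap.ker g) →ₗ[Λ] ↥(LinearMap.ker τ) :=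
        LinearMap.codRestrict _
          (LinearMap.codRestrict _ ((LinearMap.ker g).subtype) (fun v => by
            have hv : g v.1 = 0 := LinearMap.mem_ker.mp v.2
            have : ρ (g v.1) = 0 := by rw [hv, map_zero]
            exact this))
          (fun v => by
            have hv : g v.1 = 0 := LinearMap.mem_ker.mp v.2
            show π (g v.1) = 0
            rw [hv, map_zero])
      let bwd : ↥(LinearMap.ker τ) →ₗ[Λ] ↥(LinearMap.ker g) :=
        LinearMap.codRestrict _
          ((LinearMap.ker (ρ ∘ₗ g)).subtype ∘ₗ (LinearMap.ker τ).subtype)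
          (fun w => LinearMap.mem_ker.mpr (hτ0 w))
      exact Module.Projective.of_equiv (LinearEquiv.ofLinear fwd bwd
        (LinearMap.ext fun w => Subtype.ext (Subtype.ext rfl))
        (LinearMap.ext fun v => Subtype.ext rfl))
    exact projective_of_extension τ hτs hP hkτ
  exact ⟨R, ρ ∘ₗ g, hR, hsurj, hkerproj⟩

lemma ker_projective_of_pdLE_one {M F : Type u} [AddCommGroup M] [Module Λ M]
    [AddCommGroup F] [Module Λ F]
    (hM : pdLE Λ 1 (ModuleCat.of Λ M)) (q : F →ₗ[Λ] M) (hq : Surjective q)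
    (hF : Module.Projective Λ F) : Module.Projective Λ ↥(LinearMap.ker q) := by
  rw [pdLE_one_iff] at hM
  obtain ⟨P, p0, hP, hp0, hkp0⟩ := hM
  let p : ↥P →ₗ[Λ] M := p0
  have hp : Surjective p := hp0
  have hkp : Module.Projective Λ ↥(LinearMap.ker p) := hkp0
  haveI := hkp
  haveI := hP
  let σ : ↥P × F →ₗ[Λ] M := p ∘ₗ LinearMap.fst Λ ↥P F - q ∘ₗ LinearMap.snd Λ ↥P F
  have hσ : ∀ z : ↥P × F, σ z = p z.1 - q z.2 := fun z => rfl
  set Z := LinearMap.ker σ with hZdef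
  let π₂ : ↥Z →ₗ[Λ] F := LinearMap.snd Λ ↥P F ∘ₗ Z.subtype
  have hπ₂ : ∀ z : ↥Z, π₂ z = z.1.2 := fun z => rfl
  have hZmem : ∀ z : ↥Z, p z.1.1 = q z.1.2 := by
    intro z
    have h0 : σ z.1 = 0 := z.2
    rw [hσ] at h0
    exact sub_eq_zero.mp h0
  have hπ₂s : Surjective π₂ := by
    intro b
    obtain ⟨a, ha⟩ := hp (q b)
    exact ⟨⟨(a, b), by rw [LinearMap.mem_ker, hσ, ha, sub_self]⟩, rfl⟩
  have hkπ₂ : Module.Projective Λ ↥(LinearMap.ker π₂) := by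
    have hmem2 : ∀ w : ↥(LinearMap.ker π₂), p w.1.1.1 = 0 := by
      intro w
      have h1 : w.1.1.2 = 0 := w.2
      have h2 := hZmem w.1
      rw [h1, map_zero] at h2
      exact h2
    let fwd : ↥(LinearMap.ker p) →ₗ[Λ] ↥(LinearMap.ker π₂) :=
      LinearMap.codRestrict _
        (LinearMap.codRestrict _ (LinearMap.prod ((LinearMap.ker p).subtype) 0) (fun v => by
          rw [LinearMap.mem_ker, hσ]
          show p v.1 - q 0 = 0
          rw [LinearMap.mem_ker.mp v.2, map_zero, sub_zero]))
        (fun v => rfl)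
    let bwd : ↥(LinearMap.ker π₂) →ₗ[Λ] ↥(LinearMap.ker p) :=
      LinearMap.codRestrict _
        (LinearMap.fst Λ ↥P F ∘ₗ Z.subtype ∘ₗ (LinearMap.ker π₂).subtype)
        (fun w => LinearMap.mem_ker.mpr (hmem2 w))
    exact Module.Projective.of_equiv (LinearEquiv.ofLinear fwd bwd
      (LinearMap.ext fun w => Subtype.ext (Subtype.ext
        (Prod.ext rfl (w.2 : w.1.1.2 = 0).symm)))
      (LinearMap.ext fun v => Subtype.ext rfl))
  have hZproj : Module.Projective Λ ↥Z := projective_of_extension π₂ hπ₂s hF hkπ₂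
  let π₁ : ↥Z →ₗ[Λ] ↥P := LinearMap.fst Λ ↥P F ∘ₗ Z.subtype
  have hπ₁s : Surjective π₁ := by
    intro a
    obtain ⟨b, hb⟩ := hq (p a)
    exact ⟨⟨(a, b), by rw [LinearMap.mem_ker, hσ, hb, sub_self]⟩, rfl⟩
  have hkπ₁ := projective_ker_retract π₁ hπ₁s hP hZproj
  haveI := hkπ₁
  have hmem1 : ∀ w : ↥(LinearMap.ker π₁), q w.1.1.2 = 0 := by
    intro w
    have h1 : w.1.1.1 = 0 := w.2
    have h2 := hZmem w.1
    rw [h1, map_zero] at h2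
    exact h2.symm
  let fwd : ↥(LinearMap.ker π₁) →ₗ[Λ] ↥(LinearMap.ker q) :=
    LinearMap.codRestrict _
      (LinearMap.snd Λ ↥P F ∘ₗ Z.subtype ∘ₗ (LinearMap.ker π₁).subtype)
      (fun w => LinearMap.mem_ker.mpr (hmem1 w))
  let bwd : ↥(LinearMap.ker q) →ₗ[Λ] ↥(LinearMap.ker π₁) :=
    LinearMap.codRestrict _
      (LinearMap.codRestrict _ ((LinearMap.prod 0 ((LinearMap.ker q).subtype))) (fun v => by
        rw [LinearMap.mem_ker, hσ]
        show p 0 - q v.1 = 0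
        rw [LinearMap.mem_ker.mp v.2, map_zero, zero_sub, neg_zero]))
      (fun v => rfl)
  exact Module.Projective.of_equiv (LinearEquiv.ofLinear fwd bwd
    (LinearMap.ext fun v => Subtype.ext rfl)
    (LinearMap.ext fun w => Subtype.ext (Subtype.ext
      (Prod.ext (w.2 : w.1.1.1 = 0).symm rfl))))

end Aux2

section Aux3

open Function LinearMap

variable {Λ : Type u} [Ring Λ]

set_option maxHeartbeats 1000000 in
set_option synthInstance.maxHeartbeats 400000 in
lemma pdLE_one_of_embedding (hgl : gldimLE Λ 2) {N W : Type u} [AddCommGroup N] [Module Λ N]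
    [AddCommGroup W] [Module Λ W] [Module.Finite Λ N]
    (hW : Module.Projective Λ W) (w : N →ₗ[Λ] W) (hw : Function.Injective w) :
    pdLE Λ 1 (ModuleCat.of Λ N) := by
  classical
  obtain ⟨s, hs⟩ := Module.projective_def.mp hW
  have hsinj : Function.Injective s := hs.injective
  -- the finitely supported image
  obtain ⟨t, ht⟩ := (Module.Finite.fg_top : (⊤ : Submodule Λ N).FG)
  set S : Finset W := t.sup fun x => (s (w x)).support with hSdef
  have hrange : ∀ x : N, s (w x) ∈ Finsupp.supported Λ Λ (↑S : Set W) := by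
    intro x
    have hx : x ∈ Submodule.span Λ (↑t : Set N) := by rw [ht]; exact Submodule.mem_top
    have hle : Submodule.span Λ (↑t : Set N) ≤
        Submodule.comap (s ∘ₗ w) (Finsupp.supported Λ Λ (↑S : Set W)) := by
      rw [Submodule.span_le]
      intro y hy
      simp only [SetLike.mem_coe, Submodule.mem_comap, LinearMap.comp_apply]
      rw [Finsupp.mem_supported]
      intro a ha
      have hle2 : (s (w y)).support ⊆ S :=
        Finset.le_sup (f := fun x => (s (w x)).support) hy
      exact Finset.mem_coe.mpr (hle2 (Finset.mem_coe.mp ha))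
    exact hle hx
  set G : Type u := (↑(↑S : Set W) → Λ) with hGdef
  let e1 : ↥(Finsupp.supported Λ Λ (↑S : Set W)) ≃ₗ[Λ] G :=
    (Finsupp.supportedEquivFinsupp (↑S : Set W)).trans
      (Finsupp.linearEquivFunOnFinite Λ Λ _)
  let emb : N →ₗ[Λ] G :=
    e1.toLinearMap ∘ₗ LinearMap.codRestrict _ (s ∘ₗ w) hrange
  have hembinj : Function.Injective emb := by
    intro a b hab
    apply hw (hsinj ?_)
    have := e1.injective hab
    exact congrArg Subtype.val this
  -- quotient
  haveI : Module.Finite Λ G := by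
    infer_instance
  set C := G ⧸ LinearMap.range emb with hCdef
  have hC : pdLE Λ 2 (ModuleCat.of Λ C) := hgl (ModuleCat.of Λ C) (inferInstanceAs (Module.Finite Λ C))
  rw [pdLE_two_iff] at hC
  obtain ⟨P, e0, hP, he0, h1'⟩ := hC
  let e' : ↥P →ₗ[Λ] C := e0
  have he' : Surjective e' := he0
  have h1 : pdLE Λ 1 (ModuleCat.of Λ ↥(LinearMap.ker e')) := h1'
  haveI := hP
  let mk : G →ₗ[Λ] C := (LinearMap.range emb).mkQ
  let σ : G × ↥P →ₗ[Λ] C := mk ∘ₗ LinearMap.fst Λ G ↥P - e' ∘ₗ LinearMap.snd Λ G ↥P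
  have hσ : ∀ z : G × ↥P, σ z = mk z.1 - e' z.2 := fun z => rfl
  set X := LinearMap.ker σ with hXdef
  have hXmem : ∀ z : ↥X, mk z.1.1 = e' z.1.2 := by
    intro z
    have h0 : σ z.1 = 0 := z.2
    rw [hσ] at h0
    exact sub_eq_zero.mp h0
  let π₁ : ↥X →ₗ[Λ] G := LinearMap.fst Λ G ↥P ∘ₗ X.subtype
  have hπ₁s : Surjective π₁ := by
    intro a
    obtain ⟨b, hb⟩ := he' (mk a)
    exact ⟨⟨(a, b), by rw [LinearMap.mem_ker, hσ, hb, sub_self]⟩, rfl⟩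
  -- ker π₁ ≃ ker e'
  have hmem1 : ∀ z : ↥(LinearMap.ker π₁), e' z.1.1.2 = 0 := by
    intro z
    have h1 : z.1.1.1 = 0 := z.2
    have h2 := hXmem z.1
    rw [h1, map_zero] at h2
    exact h2.symm
  let fwd : ↥(LinearMap.ker π₁) →ₗ[Λ] ↥(LinearMap.ker e') :=
    LinearMap.codRestrict _
      (LinearMap.snd Λ G ↥P ∘ₗ X.subtype ∘ₗ (LinearMap.ker π₁).subtype)
      (fun z => LinearMap.mem_ker.mpr (hmem1 z))
  let bwd : ↥(LinearMap.ker e') →ₗ[Λ] ↥(LinearMap.ker π₁) :=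
    LinearMap.codRestrict _
      (LinearMap.codRestrict _ (LinearMap.prod 0 ((LinearMap.ker e').subtype)) (fun v => by
        rw [LinearMap.mem_ker, hσ]
        show mk 0 - e' v.1 = 0
        rw [LinearMap.mem_ker.mp v.2, map_zero, sub_zero]))
      (fun v => rfl)
  let ek : ↥(LinearMap.ker e') ≃ₗ[Λ] ↥(LinearMap.ker π₁) :=
    LinearEquiv.ofLinear bwd fwd
      (LinearMap.ext fun z => Subtype.ext (Subtype.ext
        (Prod.ext (z.2 : z.1.1.1 = 0).symm rfl)))
      (LinearMap.ext fun v => Subtype.ext rfl)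
  have hX1 : pdLE Λ 1 (ModuleCat.of Λ ↥X) :=
    pdLE_one_extension π₁ hπ₁s inferInstance (pdLE_one_equiv ek h1)
  let π₂ : ↥X →ₗ[Λ] ↥P := LinearMap.snd Λ G ↥P ∘ₗ X.subtype
  have hπ₂s : Surjective π₂ := by
    intro b
    obtain ⟨a, ha⟩ := (LinearMap.range emb).mkQ_surjective (e' b)
    exact ⟨⟨(a, b), by rw [LinearMap.mem_ker, hσ]; show mk a - e' b = 0; rw [ha, sub_self]⟩, rfl⟩
  have h2 := pdLE_one_ker π₂ hπ₂s hP hX1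
  -- ker π₂ ≃ N
  have hmem2 : ∀ z : ↥(LinearMap.ker π₂), z.1.1.1 ∈ LinearMap.range emb := by
    intro z
    have h1 : z.1.1.2 = 0 := z.2
    have h3 := hXmem z.1
    rw [h1, map_zero] at h3
    rwa [← Submodule.ker_mkQ (LinearMap.range emb), LinearMap.mem_ker]
  let fwd2 : ↥(LinearMap.ker π₂) →ₗ[Λ] ↥(LinearMap.range emb) :=
    LinearMap.codRestrict _
      (LinearMap.fst Λ G ↥P ∘ₗ X.subtype ∘ₗ (LinearMap.ker π₂).subtype)
      (fun z => hmem2 z)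
  let bwd2 : ↥(LinearMap.range emb) →ₗ[Λ] ↥(LinearMap.ker π₂) :=
    LinearMap.codRestrict _
      (LinearMap.codRestrict _ (LinearMap.prod ((LinearMap.range emb).subtype) 0) (fun v => by
        rw [LinearMap.mem_ker, hσ]
        show mk v.1 - e' 0 = 0
        have : mk v.1 = 0 := by
          rw [← LinearMap.mem_ker, Submodule.ker_mkQ]
          exact v.2
        rw [this, map_zero, sub_zero]))
      (fun v => rfl)
  let ek2 : ↥(LinearMap.ker π₂) ≃ₗ[Λ] ↥(LinearMap.range emb) :=
    LinearEquiv.ofLinear fwd2 bwd2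
      (LinearMap.ext fun v => Subtype.ext rfl)
      (LinearMap.ext fun z => Subtype.ext (Subtype.ext
        (Prod.ext rfl (z.2 : z.1.1.2 = 0).symm)))
  let ek3 : ↥(LinearMap.range emb) ≃ₗ[Λ] N := (LinearEquiv.ofInjective emb hembinj).symm
  exact pdLE_one_equiv (ek2.trans ek3) h2

end Aux3

section Aux4

open Function LinearMap

variable {Λ : Type u} [Ring Λ]

set_option maxHeartbeats 1000000 in
set_option synthInstance.maxHeartbeats 400000 in
lemma exists_embedding (hgl : gldimLE Λ 2)
    {I₀ I₁ : Type u} [AddCommGroup I₀] [Module Λ I₀] [AddCommGroup I₁] [Module Λ I₁]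
    (f : Λ →ₗ[Λ] I₀) (g : I₀ →ₗ[Λ] I₁)
    (hI₀inj : Module.Injective Λ I₀) (hI₀proj : Module.Projective Λ I₀)
    (hI₁inj : Module.Injective Λ I₁) (hI₁proj : Module.Projective Λ I₁)
    (hf : Function.Injective f) (hgf : LinearMap.ker g = LinearMap.range f)
    [IsNoetherianRing Λ]
    {M : Type u} [AddCommGroup M] [Module Λ M] [Module.Finite Λ M]
    (hM : pdLE Λ 1 (ModuleCat.of Λ M)) :
    ∃ (W : Type u) (_ : AddCommGroup W) (_ : Module Λ W),
      Module.Projective Λ W ∧ Module.Injective Λ W ∧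
      ∃ w : M →ₗ[Λ] W, Function.Injective w := by
  classical
  -- powers of f and g
  let fpow : ∀ t : ℕ, (Fin t → Λ) →ₗ[Λ] (Fin t → I₀) := fun t =>
    LinearMap.pi fun l => f ∘ₗ LinearMap.proj l
  let gpow : ∀ t : ℕ, (Fin t → I₀) →ₗ[Λ] (Fin t → I₁) := fun t =>
    LinearMap.pi fun l => g ∘ₗ LinearMap.proj l
  have hfpow : ∀ t (x : Fin t → Λ) (l : Fin t), fpow t x l = f (x l) := fun t x l => rfl
  have hgpow : ∀ t (x : Fin t → I₀) (l : Fin t), gpow t x l = g (x l) := fun t x l => rfl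
  have hfpowinj : ∀ t, Function.Injective (fpow t) := by
    intro t x y hxy
    funext l
    exact hf (by rw [← hfpow t x l, ← hfpow t y l, hxy])
  have hgf0 : ∀ (a : Λ), g (f a) = 0 := by
    intro a
    have : f a ∈ LinearMap.ker g := by rw [hgf]; exact ⟨a, rfl⟩
    exact LinearMap.mem_ker.mp this
  -- step 1 : free presentation with projective kernel
  obtain ⟨n, q, hq⟩ := Module.Finite.exists_fin' Λ M
  set K := LinearMap.ker q with hKdef
  have hKproj : Module.Projective Λ ↥K :=
    ker_projective_of_pdLE_one hM q hq inferInstance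
  haveI := hKproj
  haveI : Module.Finite Λ ↥K := Module.Finite.iff_fg.mpr (IsNoetherian.noetherian K)
  obtain ⟨m, c, hc⟩ := Module.Finite.exists_fin' Λ ↥K
  obtain ⟨i, hci⟩ := Module.projective_lifting_property c LinearMap.id hc
  have hcii : ∀ x, c (i x) = x := fun x => LinearMap.congr_fun hci x
  have hiinj : Function.Injective i := fun a b hab => by rw [← hcii a, ← hcii b, hab]
  let j : ↥K →ₗ[Λ] (Fin m → I₀) := fpow m ∘ₗ i
  have hjinj : Function.Injective j := fun a b hab => hiinj (hfpowinj m hab)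
  have hI0m : Module.Injective Λ (Fin m → I₀) := injective_pi hI₀inj
  have hI0n : Module.Injective Λ (Fin n → I₀) := injective_pi hI₀inj
  -- extend j along K ⊆ Λ^n
  obtain ⟨h, hh⟩ := hI0m.out K.subtype (Submodule.injective_subtype K) j
  -- D
  set D := (Fin m → I₀) ⧸ LinearMap.range j with hDdef
  let mkj : (Fin m → I₀) →ₗ[Λ] D := (LinearMap.range j).mkQ
  have hKle : K ≤ LinearMap.ker (mkj ∘ₗ h) := by
    intro x hx
    rw [LinearMap.mem_ker, LinearMap.comp_apply]
    have : h x = j ⟨x, hx⟩ := hh ⟨x, hx⟩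
    rw [this]
    rw [← LinearMap.mem_ker, Submodule.ker_mkQ]
    exact ⟨⟨x, hx⟩, rfl⟩
  let u1 : ((Fin n → Λ) ⧸ K) →ₗ[Λ] D := K.liftQ (mkj ∘ₗ h) hKle
  have hu1 : ∀ y : Fin n → Λ, u1 (K.mkQ y) = mkj (h y) := fun y => rfl
  -- μ : ker h ↪ quotient
  let μ : ↥(LinearMap.ker h) →ₗ[Λ] ((Fin n → Λ) ⧸ K) := K.mkQ ∘ₗ (LinearMap.ker h).subtype
  have hμinj : Function.Injective μ := by
    intro a b hab
    have h1 : a.1 - b.1 ∈ K := by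
      rw [← Submodule.ker_mkQ K, LinearMap.mem_ker, map_sub, sub_eq_zero]
      exact hab
    have h2 : h (a.1 - b.1) = j ⟨a.1 - b.1, h1⟩ := hh ⟨a.1 - b.1, h1⟩
    have h3 : h (a.1 - b.1) = 0 := by
      rw [map_sub, LinearMap.mem_ker.mp a.2, LinearMap.mem_ker.mp b.2, sub_zero]
    have h4 : (⟨a.1 - b.1, h1⟩ : ↥K) = 0 := hjinj (by rw [← h2, h3, map_zero])
    have h5 : a.1 - b.1 = 0 := congrArg Subtype.val h4
    exact Subtype.ext (sub_eq_zero.mp h5)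
  obtain ⟨ψ, hψ⟩ := hI0n.out μ hμinj (fpow n ∘ₗ (LinearMap.ker h).subtype)
  -- d₂ : D → I₁^m
  have hrangele : LinearMap.range j ≤ LinearMap.ker (gpow m) := by
    rintro x ⟨k, rfl⟩
    rw [LinearMap.mem_ker]
    funext l
    rw [hgpow]
    show g ((fpow m (i k)) l) = 0
    rw [hfpow, hgf0]
  let d2 : D →ₗ[Λ] (Fin m → I₁) := (LinearMap.range j).liftQ (gpow m) hrangele
  have hd2 : ∀ x : Fin m → I₀, d2 (mkj x) = gpow m x := fun x => rfl
  -- ν : ker c ↪ D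
  let ν : ↥(LinearMap.ker c) →ₗ[Λ] D := mkj ∘ₗ fpow m ∘ₗ (LinearMap.ker c).subtype
  have hνinj : Function.Injective ν := by
    intro a b hab
    have h1 : fpow m (a.1 - b.1) ∈ LinearMap.range j := by
      have h0 : mkj (fpow m a.1 - fpow m b.1) = 0 := by
        rw [map_sub, sub_eq_zero]; exact hab
      rw [← map_sub] at h0
      rw [← Submodule.ker_mkQ (LinearMap.range j), LinearMap.mem_ker]
      exact h0
    obtain ⟨k, hk⟩ := h1
    have h2 : fpow m (i k) = fpow m (a.1 - b.1) := hk
    have h3 : i k = a.1 - b.1 := hfpowinj m h2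
    have h4 : k = 0 := by
      have := congrArg c h3
      rw [hcii, map_sub, LinearMap.mem_ker.mp a.2, LinearMap.mem_ker.mp b.2, sub_zero] at this
      exact this
    have h5 : a.1 - b.1 = 0 := by rw [← h3, h4, map_zero]
    exact Subtype.ext (sub_eq_zero.mp h5)
  obtain ⟨ζ, hζ⟩ := hI0m.out ν hνinj (fpow m ∘ₗ (LinearMap.ker c).subtype)
  -- final embedding
  let W : Type u := ((Fin m → I₁) × (Fin m → I₀)) × (Fin n → I₀)
  let w0 : ((Fin n → Λ) ⧸ K) →ₗ[Λ] W :=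
    LinearMap.prod (LinearMap.prod (d2 ∘ₗ u1) (ζ ∘ₗ u1)) ψ
  have hw0 : Function.Injective w0 := by
    rw [← LinearMap.ker_eq_bot, eq_bot_iff]
    intro x hx
    obtain ⟨y, rfl⟩ := Submodule.mkQ_surjective K x
    have hx0 : w0 (K.mkQ y) = 0 := LinearMap.mem_ker.mp hx
    have hc1 : d2 (u1 (K.mkQ y)) = 0 := congrArg (fun z => z.1.1) hx0
    have hc2 : ζ (u1 (K.mkQ y)) = 0 := congrArg (fun z => z.1.2) hx0
    have hc3 : ψ (K.mkQ y) = 0 := congrArg (fun z => z.2) hx0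
    -- step A : h y ∈ range fpow
    have hA : gpow m (h y) = 0 := by rw [← hd2, ← hu1]; exact hc1
    have hA2 : ∀ l, ∃ a : Λ, f a = h y l := by
      intro l
      have : h y l ∈ LinearMap.ker g := by
        rw [LinearMap.mem_ker]
        have := congrFun hA l
        rwa [hgpow] at this
      rw [hgf] at this
      exact this
    choose y' hy' using hA2
    -- step B : u1 (mk y) = ν z
    set z : Fin m → Λ := y' - i (c y') with hzdef
    have hz : z ∈ LinearMap.ker c := by
      rw [LinearMap.mem_ker, map_sub, hcii, sub_self]
    have hfz : fpow m y' = h y := funext fun l => hy' l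
    have hBν : ν ⟨z, hz⟩ = u1 (K.mkQ y) := by
      rw [hu1]
      show mkj (fpow m z) = mkj (h y)
      rw [← sub_eq_zero, ← map_sub, ← LinearMap.mem_ker, Submodule.ker_mkQ]
      have : fpow m z - h y = -(fpow m (i (c y'))) := by
        rw [hzdef, map_sub, hfz]
        abel
      rw [this]
      exact Submodule.neg_mem _ ⟨c y', rfl⟩
    -- step C : z = 0, so u1 (mk y) = 0
    have hC : fpow m z = 0 := by
      have h6 : fpow m z = ζ (u1 (K.mkQ y)) := by
        rw [← hBν]; exact (hζ ⟨z, hz⟩).symm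
      rw [h6]; exact hc2
    have hz0 : z = 0 := by
      apply hfpowinj m
      rw [hC, map_zero]
    have hu10 : u1 (K.mkQ y) = 0 := by
      have hz00 : (⟨z, hz⟩ : ↥(LinearMap.ker c)) = 0 := Subtype.ext hz0
      rw [← hBν, hz00, map_zero]
    -- step D : h y ∈ range j
    have hD : h y ∈ LinearMap.range j := by
      rw [← Submodule.ker_mkQ (LinearMap.range j), LinearMap.mem_ker]
      rw [hu1] at hu10
      exact hu10
    obtain ⟨k, hk⟩ := hD
    -- step E
    set y2 : Fin n → Λ := y - k.1 with hy2def
    have hy2mem : y2 ∈ LinearMap.ker h := by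
      have hhk : h k.1 = j k := hh k
      rw [LinearMap.mem_ker, hy2def, map_sub, hhk, hk, sub_self]
    have hmkk : K.mkQ k.1 = 0 := by
      rw [← LinearMap.mem_ker, Submodule.ker_mkQ]
      exact k.2
    have hxeq : K.mkQ y = μ ⟨y2, hy2mem⟩ := by
      show K.mkQ y = K.mkQ y2
      rw [hy2def, map_sub, hmkk, sub_zero]
    -- step F
    have hF : fpow n y2 = 0 := by
      have h7 : fpow n y2 = ψ (K.mkQ y) := by
        rw [hxeq]; exact (hψ ⟨y2, hy2mem⟩).symm
      rw [h7]; exact hc3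
    have hy20 : y2 = 0 := by
      apply hfpowinj n
      rw [hF, map_zero]
    show K.mkQ y ∈ (⊥ : Submodule Λ ((Fin n → Λ) ⧸ K))
    rw [Submodule.mem_bot, hxeq]
    have : (⟨y2, hy2mem⟩ : ↥(LinearMap.ker h)) = 0 := Subtype.ext hy20
    rw [this, map_zero]
  -- assemble
  let eM : M ≃ₗ[Λ] ((Fin n → Λ) ⧸ K) := (q.quotKerEquivOfSurjective hq).symm
  have hWproj : Module.Projective Λ W := by
    have h1 : Module.Projective Λ (Fin m → I₁) := projective_pi hI₁proj
    have h2 : Module.Projective Λ (Fin m → I₀) := projective_pi hI₀proj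
    have h3 : Module.Projective Λ (Fin n → I₀) := projective_pi hI₀proj
    haveI := h1; haveI := h2; haveI := h3
    infer_instance
  have hWinj : Module.Injective Λ W :=
    injective_prod (injective_prod (injective_pi hI₁inj) hI0m) hI0n
  refine ⟨W, inferInstance, inferInstance, hWproj, hWinj, w0 ∘ₗ eM.toLinearMap, ?_⟩
  intro a b hab
  apply eM.injective
  apply hw0
  simpa using hab

end Aux4

section Aux5

open Function LinearMap

variable {Λ : Type u} [Ring Λ]

lemma socle_essential {M : Type u} [AddCommGroup M] [Module Λ M] [IsArtinian Λ M]
    {N : Submodule Λ M} (h : N ⊓ socle Λ M = ⊥) : N = ⊥ := by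
  haveI : IsAtomic (Submodule Λ M) := isAtomic_of_orderBot_wellFounded_lt wellFounded_lt
  rcases eq_bot_or_exists_atom_le N with h0 | ⟨a, ha, haN⟩
  · exact h0
  · exfalso
    have hsimple : IsSimpleModule Λ ↥a := isSimpleModule_iff_isAtom.mpr ha
    have hle : a ≤ socle Λ M :=
      le_sSup (show a ∈ {S : Submodule Λ M | IsSimpleModule Λ ↥S} from hsimple)
    have hbot : a ≤ ⊥ := h ▸ le_inf haN hle
    exact ha.1 (le_bot_iff.mp hbot)

end Aux5

/-- Over a finite dimensional Auslander algebra, a finitely generated module has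
projective dimension at most `1` iff its socle does. -/
theorem stmt_9 (k Λ : Type u) [Field k] [Ring Λ] [Algebra k Λ] [FiniteDimensional k Λ]
    (hΛ : IsAuslander Λ)
    (M : Type u) [AddCommGroup M] [Module Λ M] [Module.Finite Λ M] :
    pdLE Λ 1 (ModuleCat.of Λ M) ↔ pdLE Λ 1 (ModuleCat.of Λ ↥(socle Λ M)) := by
  obtain ⟨hgl, I₀, I₁, f, g, hI₀inj, hI₀proj, hI₁inj, hI₁proj, hfinj, hgf⟩ := hΛ
  haveI : IsNoetherianRing Λ := isNoetherianRing_iff.mpr (isNoetherian_of_tower k inferInstance)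
  haveI : IsArtinianRing Λ := isArtinian_of_tower k inferInstance
  haveI : IsArtinian Λ M := inferInstance
  haveI hsocfin : Module.Finite Λ ↥(socle Λ M) :=
    Module.Finite.iff_fg.mpr (IsNoetherian.noetherian _)
  constructor
  · intro h1
    obtain ⟨W, _, _, hWproj, hWinj, w, hw⟩ :=
      exists_embedding hgl f g hI₀inj hI₀proj hI₁inj hI₁proj hfinj hgf h1
    exact pdLE_one_of_embedding hgl hWproj (w ∘ₗ (socle Λ M).subtype)
      (hw.comp (Submodule.injective_subtype _))
  · intro h1
    obtain ⟨W, _, _, hWproj, hWinj, w, hw⟩ :=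
      exists_embedding hgl f g hI₀inj hI₀proj hI₁inj hI₁proj hfinj hgf h1
    obtain ⟨h, hh⟩ := hWinj.out (socle Λ M).subtype (Submodule.injective_subtype _) w
    have hker : LinearMap.ker h ⊓ socle Λ M = ⊥ := by
      rw [eq_bot_iff]
      intro x hx
      obtain ⟨hx1, hx2⟩ := Submodule.mem_inf.mp hx
      rw [Submodule.mem_bot]
      have heq : h x = w ⟨x, hx2⟩ := hh ⟨x, hx2⟩
      have h0 : w ⟨x, hx2⟩ = w 0 := by
        rw [map_zero, ← heq]
        exact LinearMap.mem_ker.mp hx1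
      exact congrArg Subtype.val (hw h0)
    have hinj : Function.Injective h := by
      rw [← LinearMap.ker_eq_bot]
      exact socle_essential hker
    exact pdLE_one_of_embedding hgl hWproj h hinj
end
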